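/- The canonical divergence is a weak contrast function (part of Theorem 4.14): with notation as above, define ρ : U × U → ℝ by ρ(u, v) = D(ι̃(u), ι̃(v)), where g is C² on U. Then (i) ρ(u, u) = 0 for all u ∈ U; (ii) for every u ∈ U, the derivative of the map u' ↦ ρ(u', v) at u' = u with v = u is zero, and the derivative of the map v' ↦ ρ(u, v') at v' = u is zero (i.e. ρ[X|−] = ρ[−|X] = 0 on the diagonal for every vector field X). -/

import Mathlib

open Matrix

section Aux

variable {n : ℕ}

/-- Any continuous linear functional on `Fin n → ℝ` is determined by its values on
the standard basis. -/
theorem clm_apply_eq_sum (L : (Fin n → ℝ) →L[ℝ] ℝ) (h : Fin n → ℝ) :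
    L h = ∑ k, h k * L (Pi.single k 1) := by
  conv_lhs => rw [← Finset.univ_sum_single h]
  rw [map_sum]
  refine Finset.sum_congr rfl fun k _ => ?_
  have hk : (Pi.single k (h k) : Fin n → ℝ) = h k • (Pi.single k 1 : Fin n → ℝ) := by
    funext j
    by_cases hj : j = k <;> simp [Pi.single_apply, hj]
  rw [hk, _root_.map_smul, smul_eq_mul]

end Aux

/-- The canonical divergence is a weak contrast function (part of
Theorem 4.14): for `ρ(u, v) = D(ι̃(u), ι̃(v))` with `ι̃` the Legendre lift of the
generating-function parametrization of a C² generating function `g`, one has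
(i) `ρ(u, u) = 0`, and (ii) both first-order derivatives of `ρ` vanish on the diagonal:
the derivative of `u' ↦ ρ(u', u)` at `u` is zero and the derivative of `v' ↦ ρ(u, v')`
at `u` is zero. -/
theorem canonical_divergence_is_weak_contrast_function (n : ℕ) (I : Finset (Fin n))
    (U : Set (Fin n → ℝ)) (hU : IsOpen U)
    (g : (Fin n → ℝ) → ℝ) (hg : ContDiffOn ℝ 2 g U)
    (dg : (Fin n → ℝ) → Fin n → ℝ)
    (hdg : ∀ w k, dg w k = fderiv ℝ g w (Pi.single k 1))
    (D : ((Fin n → ℝ) × (Fin n → ℝ) × ℝ) → ((Fin n → ℝ) × (Fin n → ℝ) × ℝ) → ℝ)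
    (hD : ∀ P Q, D P Q = P.2.2 + (Q.2.1 ⬝ᵥ Q.1 - Q.2.2) - P.1 ⬝ᵥ Q.2.1)
    (ι : (Fin n → ℝ) → (Fin n → ℝ) × (Fin n → ℝ) × ℝ)
    (hι : ∀ w, ι w = ((fun k => if k ∈ I then w k else -(dg w k)),
                      (fun k => if k ∈ I then dg w k else w k),
                      (∑ j ∈ Iᶜ, w j * (-(dg w j))) + g w))
    (ρ : (Fin n → ℝ) → (Fin n → ℝ) → ℝ)
    (hρ : ∀ u v, ρ u v = D (ι u) (ι v)) :
    (∀ u ∈ U, ρ u u = 0) ∧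
    (∀ u ∈ U, fderiv ℝ (fun w => ρ w u) u = 0 ∧ fderiv ℝ (fun w => ρ u w) u = 0) := by
  classical
  constructor
  · intro u hu
    simp only [hρ, hD, hι]
    rw [dotProduct_comm]
    ring
  · intro u hu
    -- Basic differentiability facts
    have hgat : ContDiffAt ℝ 2 g u := hg.contDiffAt (hU.mem_nhds hu)
    have hG : HasFDerivAt g (fderiv ℝ g u) u :=
      (hgat.differentiableAt (by norm_num)).hasFDerivAt
    have hfd : DifferentiableAt ℝ (fderiv ℝ g) u :=
      (hgat.fderiv_right (by norm_num : (1 : WithTop ℕ∞) + 1 ≤ 2)).differentiableAt one_ne_zero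
    set Φ := fderiv ℝ (fderiv ℝ g) u with hΦdef
    have hΦ : HasFDerivAt (fderiv ℝ g) Φ u := hfd.hasFDerivAt
    -- derivative of `w ↦ dg w k`
    set A : Fin n → ((Fin n → ℝ) →L[ℝ] ℝ) :=
      fun k => (ContinuousLinearMap.apply ℝ ℝ (Pi.single k 1 : Fin n → ℝ)).comp Φ with hAdef
    have hA : ∀ k, HasFDerivAt (fun w => dg w k) (A k) u := by
      intro k
      have hfun : (fun w => dg w k) = fun w => fderiv ℝ g w (Pi.single k 1) :=
        funext fun w => hdg w k
      rw [hfun]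
      exact ((ContinuousLinearMap.apply ℝ ℝ (Pi.single k 1 : Fin n → ℝ)).hasFDerivAt).comp u hΦ
    have hAapp : ∀ k h, A k h = Φ h (Pi.single k 1) := fun k h => rfl
    -- derivative of coordinate projections
    have hproj : ∀ k : Fin n, HasFDerivAt (fun w : Fin n → ℝ => w k)
        (ContinuousLinearMap.proj k : (Fin n → ℝ) →L[ℝ] ℝ) u :=
      fun k => (ContinuousLinearMap.proj k : (Fin n → ℝ) →L[ℝ] ℝ).hasFDerivAt
    -- the linear functional `fderiv ℝ g u` expanded in coordinates
    have hGh : ∀ h, (fderiv ℝ g u) h = ∑ k, h k * dg u k := by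
      intro h
      rw [clm_apply_eq_sum]
      exact Finset.sum_congr rfl fun k _ => by rw [hdg]
    -- derivative of the `z`-component
    have hT1 : HasFDerivAt (fun w => ∑ j ∈ Iᶜ, w j * (-(dg w j)))
        (∑ j ∈ Iᶜ, ((u j) • (-(A j)) +
          (-(dg u j)) • (ContinuousLinearMap.proj j : (Fin n → ℝ) →L[ℝ] ℝ))) u :=
      HasFDerivAt.fun_sum fun j _ => (hproj j).mul (hA j).neg
    constructor
    · -- first slot
      have hφ : (fun w => ρ w u) = fun w =>
          (((∑ j ∈ Iᶜ, w j * (-(dg w j))) + g w)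
          + (((fun k => if k ∈ I then dg u k else u k) ⬝ᵥ
              (fun k => if k ∈ I then u k else -(dg u k)))
              - ((∑ j ∈ Iᶜ, u j * (-(dg u j))) + g u)))
          - (∑ k, (if k ∈ I then w k else -(dg w k)) * (if k ∈ I then dg u k else u k)) := by
        funext w
        simp only [hρ, hD, hι, dotProduct]
      have hT4 : ∀ k : Fin n, HasFDerivAt
          (fun w => (if k ∈ I then w k else -(dg w k)) * (if k ∈ I then dg u k else u k))
          (if k ∈ I then (dg u k) • (ContinuousLinearMap.proj k : (Fin n → ℝ) →L[ℝ] ℝ)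
            else (u k) • (-(A k))) u := by
        intro k
        by_cases hk : k ∈ I
        · simp only [hk, if_true]
          exact (hproj k).mul_const _
        · simp only [hk, if_false]
          exact ((hA k).neg).mul_const _
      have hder : HasFDerivAt (fun w => ρ w u)
          (((∑ j ∈ Iᶜ, ((u j) • (-(A j)) +
              (-(dg u j)) • (ContinuousLinearMap.proj j : (Fin n → ℝ) →L[ℝ] ℝ)))
            + fderiv ℝ g u)
          - (∑ k, if k ∈ I then (dg u k) • (ContinuousLinearMap.proj k : (Fin n → ℝ) →L[ℝ] ℝ)
              else (u k) • (-(A k)))) u := by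
        rw [hφ]
        exact (((hT1.add hG).add_const _).sub (HasFDerivAt.fun_sum fun k _ => hT4 k))
      rw [hder.fderiv]
      ext h
      simp only [ContinuousLinearMap.sub_apply, ContinuousLinearMap.add_apply,
        ContinuousLinearMap.coe_sum', Finset.sum_apply, ContinuousLinearMap.smul_apply,
        ContinuousLinearMap.neg_apply, ContinuousLinearMap.proj_apply, smul_eq_mul,
        ContinuousLinearMap.zero_apply, apply_ite (fun (L : (Fin n → ℝ) →L[ℝ] ℝ) => L h)]
      rw [hGh h, ← Finset.sum_add_sum_compl I (fun k => h k * dg u k),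
        ← Finset.sum_add_sum_compl I
          (fun k => if k ∈ I then dg u k * h k else u k * -(A k h))]
      have e1 : ∑ k ∈ I, (if k ∈ I then dg u k * h k else u k * -(A k h))
          = ∑ k ∈ I, dg u k * h k := Finset.sum_congr rfl fun k hk => if_pos hk
      have e2 : ∑ k ∈ Iᶜ, (if k ∈ I then dg u k * h k else u k * -(A k h))
          = ∑ k ∈ Iᶜ, u k * -(A k h) :=
        Finset.sum_congr rfl fun k hk => if_neg (Finset.mem_compl.mp hk)
      rw [e1, e2]
      have c1 : ∑ k ∈ I, h k * dg u k = ∑ k ∈ I, dg u k * h k :=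
        Finset.sum_congr rfl fun k _ => mul_comm _ _
      have c2 : (∑ j ∈ Iᶜ, (u j * -(A j h) + -(dg u j) * h j))
          + (∑ k ∈ Iᶜ, h k * dg u k) - (∑ k ∈ Iᶜ, u k * -(A k h)) = 0 := by
        rw [← Finset.sum_add_distrib, ← Finset.sum_sub_distrib]
        exact Finset.sum_eq_zero fun k _ => by ring
      linarith
    · -- second slot
      have hψ : (fun w => ρ u w) = fun w =>
          (((∑ j ∈ Iᶜ, u j * (-(dg u j))) + g u)
          + ((∑ k, (if k ∈ I then dg w k else w k) * (if k ∈ I then w k else -(dg w k)))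
              - ((∑ j ∈ Iᶜ, w j * (-(dg w j))) + g w)))
          - (∑ k, (if k ∈ I then u k else -(dg u k)) * (if k ∈ I then dg w k else w k)) := by
        funext w
        simp only [hρ, hD, hι, dotProduct]
      have hP : ∀ k : Fin n, HasFDerivAt
          (fun w => (if k ∈ I then dg w k else w k) * (if k ∈ I then w k else -(dg w k)))
          (if k ∈ I then (dg u k) • (ContinuousLinearMap.proj k : (Fin n → ℝ) →L[ℝ] ℝ)
              + (u k) • A k
            else (u k) • (-(A k))
              + (-(dg u k)) • (ContinuousLinearMap.proj k : (Fin n → ℝ) →L[ℝ] ℝ)) u := by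
        intro k
        by_cases hk : k ∈ I
        · simp only [hk, if_true]
          exact (hA k).mul (hproj k)
        · simp only [hk, if_false]
          exact (hproj k).mul (hA k).neg
      have hQ : ∀ k : Fin n, HasFDerivAt
          (fun w => (if k ∈ I then u k else -(dg u k)) * (if k ∈ I then dg w k else w k))
          (if k ∈ I then (u k) • A k
            else (-(dg u k)) • (ContinuousLinearMap.proj k : (Fin n → ℝ) →L[ℝ] ℝ)) u := by
        intro k
        by_cases hk : k ∈ I
        · simp only [hk, if_true]
          exact (hA k).const_mul _
        · simp only [hk, if_false]
          exact (hproj k).const_mul _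
      have hder : HasFDerivAt (fun w => ρ u w)
          (((∑ k, if k ∈ I then (dg u k) • (ContinuousLinearMap.proj k : (Fin n → ℝ) →L[ℝ] ℝ)
                + (u k) • A k
              else (u k) • (-(A k))
                + (-(dg u k)) • (ContinuousLinearMap.proj k : (Fin n → ℝ) →L[ℝ] ℝ))
            - ((∑ j ∈ Iᶜ, ((u j) • (-(A j)) +
                (-(dg u j)) • (ContinuousLinearMap.proj j : (Fin n → ℝ) →L[ℝ] ℝ)))
              + fderiv ℝ g u))
          - (∑ k, if k ∈ I then (u k) • A k
              else (-(dg u k)) • (ContinuousLinearMap.proj k : (Fin n → ℝ) →L[ℝ] ℝ))) u := by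
        rw [hψ]
        exact ((((HasFDerivAt.fun_sum fun k _ => hP k).sub (hT1.add hG)).const_add _).sub
          (HasFDerivAt.fun_sum fun k _ => hQ k))
      rw [hder.fderiv]
      ext h
      simp only [ContinuousLinearMap.sub_apply, ContinuousLinearMap.add_apply,
        ContinuousLinearMap.coe_sum', Finset.sum_apply, ContinuousLinearMap.smul_apply,
        ContinuousLinearMap.neg_apply, ContinuousLinearMap.proj_apply, smul_eq_mul,
        ContinuousLinearMap.zero_apply, apply_ite (fun (L : (Fin n → ℝ) →L[ℝ] ℝ) => L h)]
      rw [hGh h, ← Finset.sum_add_sum_compl I (fun k => h k * dg u k),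
        ← Finset.sum_add_sum_compl I
          (fun k => if k ∈ I then dg u k * h k + u k * A k h
            else u k * -(A k h) + -(dg u k) * h k),
        ← Finset.sum_add_sum_compl I
          (fun k => if k ∈ I then u k * A k h else -(dg u k) * h k)]
      have e1 : ∑ k ∈ I, (if k ∈ I then dg u k * h k + u k * A k h
            else u k * -(A k h) + -(dg u k) * h k)
          = ∑ k ∈ I, (dg u k * h k + u k * A k h) :=
        Finset.sum_congr rfl fun k hk => if_pos hk
      have e2 : ∑ k ∈ Iᶜ, (if k ∈ I then dg u k * h k + u k * A k h
            else u k * -(A k h) + -(dg u k) * h k)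
          = ∑ k ∈ Iᶜ, (u k * -(A k h) + -(dg u k) * h k) :=
        Finset.sum_congr rfl fun k hk => if_neg (Finset.mem_compl.mp hk)
      have e3 : ∑ k ∈ I, (if k ∈ I then u k * A k h else -(dg u k) * h k)
          = ∑ k ∈ I, u k * A k h := Finset.sum_congr rfl fun k hk => if_pos hk
      have e4 : ∑ k ∈ Iᶜ, (if k ∈ I then u k * A k h else -(dg u k) * h k)
          = ∑ k ∈ Iᶜ, -(dg u k) * h k :=
        Finset.sum_congr rfl fun k hk => if_neg (Finset.mem_compl.mp hk)
      rw [e1, e2, e3, e4]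
      have c1 : (∑ k ∈ I, (dg u k * h k + u k * A k h)) - (∑ k ∈ I, h k * dg u k)
          - (∑ k ∈ I, u k * A k h) = 0 := by
        rw [← Finset.sum_sub_distrib, ← Finset.sum_sub_distrib]
        exact Finset.sum_eq_zero fun k _ => by ring
      have c2 : (∑ k ∈ Iᶜ, (u k * -(A k h) + -(dg u k) * h k))
          - (∑ j ∈ Iᶜ, (u j * -(A j h) + -(dg u j) * h j))
          - (∑ k ∈ Iᶜ, h k * dg u k) - (∑ k ∈ Iᶜ, -(dg u k) * h k) = 0 := by
        rw [← Finset.sum_sub_distrib, ← Finset.sum_sub_distrib, ← Finset.sum_sub_distrib]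
        exact Finset.sum_eq_zero fun k _ => by ring
      linarith
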